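/- arXiv:1704.00814 — 9 statements merged into one kernel-verified Lean document; each statement's English description precedes it below -/
import Mathlib

section
/- For every n ∈ ℕ and every permutation p of Fin n, inv(p) ≤ (n − 1) · |{i : p(i) ≠ i}|. (Equivalently, the normalized Coxeter length ℓ_C(p) = 2·inv(p)/(n(n−1)) satisfies ℓ_C(p) ≤ 2·ℓ_H(p), where ℓ_H(p) = |{i : p(i) ≠ i}|/n is the normalized Hamming length.) -/
open Finset

theorem stmt_1 (n : ℕ) (p : Equiv.Perm (Fin n)) :
    (Finset.univ.filter (fun ij : Fin n × Fin n => ij.1 < ij.2 ∧ p ij.2 < p ij.1)).card ≤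
      (n - 1) * (Finset.univ.filter (fun i : Fin n => p i ≠ i)).card := by
  classical
  set S := Finset.univ.filter (fun i : Fin n => p i ≠ i) with hS
  set T : Finset (Fin n × Fin n) :=
    S.biUnion (fun a => (Finset.univ.erase a).image (Prod.mk a)) with hT
  have hTcard : T.card = (n - 1) * S.card := by
    rw [hT, Finset.card_biUnion]
    · have : ∀ a ∈ S, ((Finset.univ.erase a).image (Prod.mk a)).card = n - 1 := by
        intro a _
        rw [Finset.card_image_of_injective _ (fun _ _ h => (Prod.mk.injEq a _ a _ ▸ h : _ ∧ _).2),
          Finset.card_erase_of_mem (Finset.mem_univ a), Finset.card_univ, Fintype.card_fin]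
      rw [Finset.sum_congr rfl this, Finset.sum_const, smul_eq_mul, mul_comm]
    · intro a _ b _ hab
      refine Finset.disjoint_left.2 ?_
      intro x hx hx'
      simp only [Finset.mem_image] at hx hx'
      obtain ⟨c, _, rfl⟩ := hx
      obtain ⟨d, _, h⟩ := hx'
      exact hab (congrArg Prod.fst h).symm
  rw [← hTcard]
  apply Finset.card_le_card_of_injOn (fun x => if p x.1 = x.1 then (x.2, x.1) else x)
  · intro x hx
    simp only [Finset.mem_coe, Finset.mem_filter, Finset.mem_univ, true_and] at hx
    obtain ⟨hlt, hinv⟩ := hx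
    have hne : x.1 ≠ x.2 := ne_of_lt hlt
    by_cases h1 : p x.1 = x.1
    · have h2 : p x.2 ≠ x.2 := by
        intro h2
        rw [h1, h2] at hinv
        exact absurd hinv (not_lt_of_gt hlt)
      simp only [h1, if_pos]
      rw [hT]
      refine Finset.mem_biUnion.2 ⟨x.2, ?_, ?_⟩
      · simp [hS, h2]
      · exact Finset.mem_image.2 ⟨x.1, Finset.mem_erase.2 ⟨hne, Finset.mem_univ _⟩, rfl⟩
    · simp only [h1, if_neg]
      rw [hT]
      refine Finset.mem_biUnion.2 ⟨x.1, ?_, ?_⟩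
      · simp [hS, h1]
      · exact Finset.mem_image.2 ⟨x.2, Finset.mem_erase.2 ⟨hne.symm, Finset.mem_univ _⟩, rfl⟩
  · intro x hx y hy hxy
    simp only [Finset.mem_coe, Finset.mem_filter, Finset.mem_univ, true_and] at hx hy
    by_cases h1 : p x.1 = x.1 <;> by_cases h2 : p y.1 = y.1 <;>
      simp only [h1, h2, if_pos, if_neg, if_true, if_false] at hxy
    · exact Prod.ext (congrArg Prod.snd hxy) (congrArg Prod.fst hxy)
    · -- (x.2, x.1) = y : then y.1 = x.2 > x.1 = y.2, contradicting y.1 < y.2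
      obtain ⟨hxlt, -⟩ := hx
      obtain ⟨hylt, -⟩ := hy
      have e1 : x.2 = y.1 := congrArg Prod.fst hxy
      have e2 : x.1 = y.2 := congrArg Prod.snd hxy
      exact absurd (e1 ▸ e2 ▸ hxlt) (not_lt_of_gt hylt)
    · obtain ⟨hxlt, -⟩ := hx
      obtain ⟨hylt, -⟩ := hy
      have e1 : x.1 = y.2 := congrArg Prod.fst hxy
      have e2 : x.2 = y.1 := congrArg Prod.snd hxy
      exact absurd (e1 ▸ e2 ▸ hylt) (not_lt_of_gt hxlt)
    · exact hxy
end

section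
/- (Diaconis–Graham) For every permutation p of Fin n, inv(p) ≤ Σ_{i} |p(i) − i| ≤ 2 · inv(p), where the sum is over all i ∈ Fin n and |p(i) − i| is the absolute value of the difference of p(i) and i as integers. -/
open Finset

variable {n : ℕ}

def invS (p : Equiv.Perm (Fin n)) : Finset (Fin n × Fin n) :=
  Finset.univ.filter (fun ij : Fin n × Fin n => ij.1 < ij.2 ∧ p ij.2 < p ij.1)

def Dsp (p : Equiv.Perm (Fin n)) : ℤ := ∑ i : Fin n, |((p i : ℕ) : ℤ) - ((i : ℕ) : ℤ)|

lemma Dsp_nonneg (p : Equiv.Perm (Fin n)) : 0 ≤ Dsp p :=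
  Finset.sum_nonneg fun _ _ => abs_nonneg _

lemma Dsp_swap (p : Equiv.Perm (Fin n)) (u v : Fin n) (huv : u ≠ v) :
    Dsp (p * Equiv.swap u v) =
      Dsp p + (|((p u : ℕ) : ℤ) - ((v : ℕ) : ℤ)| - |((p u : ℕ) : ℤ) - ((u : ℕ) : ℤ)|)
            + (|((p v : ℕ) : ℤ) - ((u : ℕ) : ℤ)| - |((p v : ℕ) : ℤ) - ((v : ℕ) : ℤ)|) := by
  have h1 : Dsp (p * Equiv.swap u v)
      = ∑ j : Fin n, |((p j : ℕ) : ℤ) - ((Equiv.swap u v j : ℕ) : ℤ)| := by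
    refine Fintype.sum_equiv (Equiv.swap u v) _ _ fun x => ?_
    rw [Equiv.swap_apply_self]
    rfl
  have h2 : (∑ j : Fin n, |((p j : ℕ) : ℤ) - ((Equiv.swap u v j : ℕ) : ℤ)|) - Dsp p
      = ∑ j : Fin n, (|((p j : ℕ) : ℤ) - ((Equiv.swap u v j : ℕ) : ℤ)| - |((p j : ℕ) : ℤ) - ((j : ℕ) : ℤ)|) := by
    rw [Finset.sum_sub_distrib]; rfl
  have h3 : (∑ j : Fin n, (|((p j : ℕ) : ℤ) - ((Equiv.swap u v j : ℕ) : ℤ)| - |((p j : ℕ) : ℤ) - ((j : ℕ) : ℤ)|))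
      = ∑ j ∈ ({u, v} : Finset (Fin n)),
          (|((p j : ℕ) : ℤ) - ((Equiv.swap u v j : ℕ) : ℤ)| - |((p j : ℕ) : ℤ) - ((j : ℕ) : ℤ)|) := by
    refine (Finset.sum_subset (Finset.subset_univ _) ?_).symm
    intro x _ hx
    simp only [Finset.mem_insert, Finset.mem_singleton] at hx
    push_neg at hx
    rw [Equiv.swap_apply_of_ne_of_ne hx.1 hx.2]
    ring
  rw [Finset.sum_pair huv] at h3
  rw [Equiv.swap_apply_left, Equiv.swap_apply_right] at h3
  rw [← h2] at h3
  linarith [h1, h3]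

lemma adj_swap {u v x y : Fin n} (hv : (v : ℕ) = (u : ℕ) + 1) (hxy : x < y)
    (hne : ¬(x = u ∧ y = v)) : Equiv.swap u v x < Equiv.swap u v y := by
  have huv : u ≠ v := by intro h; rw [h] at hv; omega
  rcases eq_or_ne x u with rfl | hxu
  · -- x = u, so y ≠ v
    have hyv : y ≠ v := fun h => hne ⟨rfl, h⟩
    have hyu : y ≠ x := hxy.ne'
    rw [Equiv.swap_apply_left, Equiv.swap_apply_of_ne_of_ne hyu hyv]
    have := Fin.lt_iff_val_lt_val.mp hxy
    have h2 : (y : ℕ) ≠ (v : ℕ) := fun h => hyv (Fin.ext h)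
    exact Fin.lt_iff_val_lt_val.mpr (by omega)
  · rcases eq_or_ne x v with rfl | hxv
    · -- x = v
      have hyv : y ≠ x := hxy.ne'
      have hyu : y ≠ u := by
        intro h; subst h
        exact absurd (Fin.lt_iff_val_lt_val.mp hxy) (by omega)
      rw [Equiv.swap_apply_right, Equiv.swap_apply_of_ne_of_ne hyu hyv]
      exact Fin.lt_iff_val_lt_val.mpr (by have := Fin.lt_iff_val_lt_val.mp hxy; omega)
    · rw [Equiv.swap_apply_of_ne_of_ne hxu hxv]
      rcases eq_or_ne y u with rfl | hyu
      · rw [Equiv.swap_apply_left]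
        exact Fin.lt_iff_val_lt_val.mpr
          (by have := Fin.lt_iff_val_lt_val.mp hxy; omega)
      · rcases eq_or_ne y v with rfl | hyv
        · rw [Equiv.swap_apply_right]
          have h1 := Fin.lt_iff_val_lt_val.mp hxy
          have h2 : (x : ℕ) ≠ (u : ℕ) := fun h => hxu (Fin.ext h)
          exact Fin.lt_iff_val_lt_val.mpr (by omega)
        · rw [Equiv.swap_apply_of_ne_of_ne hyu hyv]; exact hxy

lemma upper_step (p : Equiv.Perm (Fin n)) {u v : Fin n} (hv : (v : ℕ) = (u : ℕ) + 1)
    (hd : p v < p u) :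
    (invS (p * Equiv.swap u v)).card + 1 ≤ (invS p).card := by
  have huv : u ≠ v := by intro h; rw [h] at hv; omega
  have huvlt : u < v := Fin.lt_iff_val_lt_val.mpr (by omega)
  set p' := p * Equiv.swap u v with hp'
  set σ : Fin n × Fin n → Fin n × Fin n := fun z => (Equiv.swap u v z.1, Equiv.swap u v z.2)
    with hσ
  have hσinj : Function.Injective σ := by
    intro a b h
    simp only [hσ, Prod.ext_iff] at h ⊢
    exact ⟨(Equiv.swap u v).injective h.1, (Equiv.swap u v).injective h.2⟩
  have hsub : insert (u, v) ((invS p').image σ) ⊆ invS p := by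
    intro z hz
    rw [Finset.mem_insert] at hz
    rcases hz with rfl | hz
    · simp only [invS, Finset.mem_filter, Finset.mem_univ, true_and]
      exact ⟨huvlt, hd⟩
    · obtain ⟨w, hw, rfl⟩ := Finset.mem_image.mp hz
      simp only [invS, Finset.mem_filter, Finset.mem_univ, true_and] at hw ⊢
      obtain ⟨hw1, hw2⟩ := hw
      have hwne : ¬(w.1 = u ∧ w.2 = v) := by
        rintro ⟨h1, h2⟩
        rw [h1, h2] at hw2
        simp only [hp', Equiv.Perm.mul_apply, Equiv.swap_apply_left,
          Equiv.swap_apply_right] at hw2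
        exact absurd hw2 (not_lt.mpr hd.le)
      refine ⟨adj_swap hv hw1 hwne, ?_⟩
      simpa only [hp', Equiv.Perm.mul_apply] using hw2
  have hnm : (u, v) ∉ (invS p').image σ := by
    intro h
    obtain ⟨w, hw, hweq⟩ := Finset.mem_image.mp h
    simp only [hσ, Prod.ext_iff] at hweq
    have h1 : w.1 = v := by
      have := congrArg (Equiv.swap u v) hweq.1
      rwa [Equiv.swap_apply_self, Equiv.swap_apply_left] at this
    have h2 : w.2 = u := by
      have := congrArg (Equiv.swap u v) hweq.2
      rwa [Equiv.swap_apply_self, Equiv.swap_apply_right] at this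
    simp only [invS, Finset.mem_filter] at hw
    have := hw.2.1
    rw [h1, h2] at this
    exact absurd huvlt (not_lt.mpr this.le)
  calc (invS p').card + 1 = ((invS p').image σ).card + 1 := by
        rw [Finset.card_image_of_injective _ hσinj]
    _ = (insert (u, v) ((invS p').image σ)).card := (Finset.card_insert_of_notMem hnm).symm
    _ ≤ (invS p).card := Finset.card_le_card hsub

lemma setup (p : Equiv.Perm (Fin n)) (hp : p ≠ 1) :
    ∃ a k : Fin n, p k = a ∧ k < a ∧ p a < a ∧ (∀ x, a < x → p x = x) ∧
      (∀ x, x ≤ a → p x ≤ a) := by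
  have hS : (Finset.univ.filter (fun x : Fin n => p x ≠ x)).Nonempty := by
    by_contra h
    rw [Finset.not_nonempty_iff_eq_empty, Finset.filter_eq_empty_iff] at h
    exact hp (Equiv.ext fun x => by simpa using not_not.mp (h (Finset.mem_univ x)))
  set S := Finset.univ.filter (fun x : Fin n => p x ≠ x) with hSdef
  set a := S.max' hS with ha
  have haS : a ∈ S := S.max'_mem hS
  have hane : p a ≠ a := (Finset.mem_filter.mp haS).2
  have hfix : ∀ x, a < x → p x = x := by
    intro x hx
    by_contra h
    have : x ∈ S := Finset.mem_filter.mpr ⟨Finset.mem_univ _, h⟩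
    exact absurd (S.le_max' x this) (not_le.mpr hx)
  have hple : ∀ x, x ≤ a → p x ≤ a := by
    intro x hx
    by_contra h
    push_neg at h
    have h1 : p (p x) = p x := hfix _ h
    have h2 : p x = x := p.injective h1
    rw [h2] at h
    exact absurd hx (not_le.mpr h)
  have hpa : p a < a := lt_of_le_of_ne (hple a le_rfl) hane
  refine ⟨a, p.symm a, p.apply_symm_apply a, ?_, hpa, hfix, hple⟩
  rcases lt_trichotomy (p.symm a) a with h | h | h
  · exact h
  · exfalso; apply hane
    have h3 := congrArg p h
    rw [p.apply_symm_apply] at h3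
    exact h3.symm
  · exfalso
    have h2 := p.apply_symm_apply a
    rw [hfix _ h] at h2
    exact absurd h2 h.ne'

lemma mu_swap (p : Equiv.Perm (Fin n)) {a k : Fin n} (hk : p k = a) (hka : k < a)
    (hpa : p a < a) :
    (Finset.univ.filter (fun x : Fin n => (p * Equiv.swap k a) x ≠ x)).card
      < (Finset.univ.filter (fun x : Fin n => p x ≠ x)).card := by
  have hkne : k ≠ a := hka.ne
  have haS : a ∈ Finset.univ.filter (fun x : Fin n => p x ≠ x) :=
    Finset.mem_filter.mpr ⟨Finset.mem_univ _, hpa.ne⟩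
  have hsub : Finset.univ.filter (fun x : Fin n => (p * Equiv.swap k a) x ≠ x)
      ⊆ (Finset.univ.filter (fun x : Fin n => p x ≠ x)).erase a := by
    intro x hx
    rw [Finset.mem_filter] at hx
    rw [Finset.mem_erase, Finset.mem_filter]
    have hx2 := hx.2
    rcases eq_or_ne x a with rfl | hxa
    · exfalso; apply hx2
      simp [Equiv.Perm.mul_apply, Equiv.swap_apply_right, hk]
    · refine ⟨hxa, Finset.mem_univ _, ?_⟩
      rcases eq_or_ne x k with rfl | hxk
      · rw [hk]; exact fun h => hkne h.symm
      · rw [Equiv.Perm.mul_apply, Equiv.swap_apply_of_ne_of_ne hxk hxa] at hx2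
        exact hx2
  calc _ ≤ ((Finset.univ.filter (fun x : Fin n => p x ≠ x)).erase a).card :=
        Finset.card_le_card hsub
    _ < _ := Finset.card_erase_lt_of_mem haS

lemma Dsp_one : Dsp (1 : Equiv.Perm (Fin n)) = 0 := by
  simp [Dsp]

lemma upper_aux : ∀ (N : ℕ) (p : Equiv.Perm (Fin n)),
    (invS p).card ≤ N → Dsp p ≤ 2 * ((invS p).card : ℤ) := by
  intro N
  induction N with
  | zero =>
    intro p hN
    rcases eq_or_ne p 1 with rfl | hp
    · rw [Dsp_one]; positivity
    · exfalso
      obtain ⟨a, k, hk, hka, hpa, hfix, hple⟩ := setup p hp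
      have hv : (k : ℕ) + 1 < n := by
        have := Fin.lt_iff_val_lt_val.mp hka
        omega
      set v : Fin n := ⟨(k : ℕ) + 1, hv⟩ with hvdef
      have hvval : (v : ℕ) = (k : ℕ) + 1 := rfl
      have hd : p v < p k := by
        rw [hk]
        have hva : v ≤ a := Fin.le_def.mpr (by
          have := Fin.lt_iff_val_lt_val.mp hka; simp [hvdef]; omega)
        refine lt_of_le_of_ne (hple v hva) fun h => ?_
        have : v = k := p.injective (by rw [h, hk])
        simp [hvdef, Fin.ext_iff] at this
      have := upper_step p hvval hd
      omega
  | succ N ih =>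
    intro p hN
    rcases eq_or_ne p 1 with rfl | hp
    · rw [Dsp_one]; positivity
    · obtain ⟨a, k, hk, hka, hpa, hfix, hple⟩ := setup p hp
      have hv : (k : ℕ) + 1 < n := by
        have := Fin.lt_iff_val_lt_val.mp hka
        omega
      set v : Fin n := ⟨(k : ℕ) + 1, hv⟩ with hvdef
      have hvval : (v : ℕ) = (k : ℕ) + 1 := rfl
      have hd : p v < p k := by
        rw [hk]
        have hva : v ≤ a := Fin.le_def.mpr (by
          have := Fin.lt_iff_val_lt_val.mp hka; simp [hvdef]; omega)
        refine lt_of_le_of_ne (hple v hva) fun h => ?_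
        have : v = k := p.injective (by rw [h, hk])
        simp [hvdef, Fin.ext_iff] at this
      have hkv : k ≠ v := by simp [hvdef, Fin.ext_iff]
      have hstep := upper_step p hvval hd
      have hswap := Dsp_swap p k v hkv
      have hih := ih (p * Equiv.swap k v) (by omega)
      have habs : (|((p k : ℕ) : ℤ) - ((k : ℕ) : ℤ)| - |((p k : ℕ) : ℤ) - ((v : ℕ) : ℤ)|)
          + (|((p v : ℕ) : ℤ) - ((v : ℕ) : ℤ)| - |((p v : ℕ) : ℤ) - ((k : ℕ) : ℤ)|) ≤ 2 := by
        simp only [Int.abs_eq_natAbs, hvval]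
        omega
      have hcard : ((invS (p * Equiv.swap k v)).card : ℤ) + 1 ≤ ((invS p).card : ℤ) := by
        exact_mod_cast hstep
      linarith

lemma lower_step (p : Equiv.Perm (Fin n)) {a k : Fin n} (hk : p k = a) (hka : k < a)
    (hpa : p a < a) (hfix : ∀ x, a < x → p x = x) (hple : ∀ x, x ≤ a → p x ≤ a) :
    (invS p).card ≤ (invS (p * Equiv.swap k a)).card + 1
      + 2 * (((Finset.Ioo k a).filter (fun l => p a < p l)).card) := by
  set p' := p * Equiv.swap k a with hp'
  set C := (Finset.Ioo k a).filter (fun l => p a < p l) with hC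
  set M : Finset (Fin n × Fin n) :=
    insert (k, a) ((C.image fun y => (k, y)) ∪ (C.image fun x => (x, a))) with hM
  have hlta : ∀ x, x < a → x ≠ k → p x < a := by
    intro x hx hxk
    refine lt_of_le_of_ne (hple x hx.le) fun h => ?_
    exact hxk (p.injective (h.trans hk.symm))
  have hp'k : p' k = p a := by
    simp [hp', Equiv.Perm.mul_apply, Equiv.swap_apply_left]
  have hp'a : p' a = a := by
    simp [hp', Equiv.Perm.mul_apply, Equiv.swap_apply_right, hk]
  have hp'other : ∀ x, x ≠ k → x ≠ a → p' x = p x := by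
    intro x h1 h2
    simp [hp', Equiv.Perm.mul_apply, Equiv.swap_apply_of_ne_of_ne h1 h2]
  set ψ : Fin n × Fin n → Fin n × Fin n := fun z => if z.2 = a then (z.1, k) else z with hψ
  have hmaps : ∀ z ∈ invS p \ M, ψ z ∈ invS p' := by
    rintro ⟨x, y⟩ hz
    rw [Finset.mem_sdiff] at hz
    obtain ⟨hzi, hzM⟩ := hz
    simp only [invS, Finset.mem_filter, Finset.mem_univ, true_and] at hzi
    obtain ⟨hxy, hinv⟩ := hzi
    simp only [hM, Finset.mem_insert, Finset.mem_union, Finset.mem_image,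
      Prod.mk.injEq, not_or, not_exists, not_and] at hzM
    obtain ⟨hzM1, hzM2, hzM3⟩ := hzM
    by_cases hya : y = a
    · -- inversion with right end a
      have hm : p a < p x := by rwa [hya] at hinv
      have hxk : x ≠ k := fun h => hzM1 h hya
      have hxa : x < a := by rwa [hya] at hxy
      have hxC : x ∉ C := fun hc => hzM3 x hc rfl hya.symm
      have hxklt : x < k := by
        rcases lt_trichotomy x k with h | h | h
        · exact h
        · exact absurd h hxk
        · exfalso; apply hxC
          rw [hC, Finset.mem_filter, Finset.mem_Ioo]
          exact ⟨⟨h, hxa⟩, hm⟩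
      simp only [hψ, if_pos hya, invS, Finset.mem_filter, Finset.mem_univ, true_and]
      refine ⟨hxklt, ?_⟩
      rw [hp'k, hp'other x hxk (ne_of_lt hxa)]
      exact hm
    · -- y ≠ a
      have hxa : x ≠ a := by
        intro h
        rw [h] at hxy
        have h2 := hfix y hxy
        rw [h2, h] at hinv
        have h3 := Fin.lt_iff_val_lt_val.mp hinv
        have h4 := Fin.lt_iff_val_lt_val.mp hpa
        have h5 := Fin.lt_iff_val_lt_val.mp hxy
        omega
      have hyla : y < a := by
        rcases lt_trichotomy y a with h | h | h
        · exact h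
        · exact absurd h hya
        · exfalso
          have h2 := hfix y h
          rw [h2] at hinv
          rcases le_or_gt x a with h3 | h3
          · have := hple x h3
            have := Fin.lt_iff_val_lt_val.mp hinv
            have := Fin.le_def.mp (hple x h3)
            have := Fin.lt_iff_val_lt_val.mp h
            omega
          · have h4 := hfix x h3
            rw [h4] at hinv
            exact absurd hxy (not_lt.mpr hinv.le)
      have hxla : x < a := lt_trans hxy hyla
      have hyk : y ≠ k := by
        intro h
        rw [h, hk] at hinv
        have := hple x hxla.le
        exact absurd hinv (not_lt.mpr this)
      simp only [hψ, if_neg hya, invS, Finset.mem_filter, Finset.mem_univ, true_and]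
      refine ⟨hxy, ?_⟩
      rw [hp'other y hyk hya]
      by_cases hxk : x = k
      · rw [hxk, hp'k]
        have hyC : y ∉ C := fun hc => hzM2 y hc hxk.symm rfl
        have : ¬ (p a < p y) := by
          intro hlt
          apply hyC
          rw [hC, Finset.mem_filter, Finset.mem_Ioo]
          exact ⟨⟨hxk ▸ hxy, hyla⟩, hlt⟩
        have hne : p y ≠ p a := fun h => hya (p.injective h)
        exact lt_of_le_of_ne (not_lt.mp this) hne
      · rw [hp'other x hxk hxa]
        exact hinv
  have hinj : Set.InjOn ψ ↑(invS p \ M) := by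
    rintro ⟨x1, y1⟩ hz1 ⟨x2, y2⟩ hz2 heq
    have inv1 : x1 < y1 ∧ p y1 < p x1 := by
      have := (Finset.mem_sdiff.mp hz1).1
      simpa only [invS, Finset.mem_filter, Finset.mem_univ, true_and] using this
    have inv2 : x2 < y2 ∧ p y2 < p x2 := by
      have := (Finset.mem_sdiff.mp hz2).1
      simpa only [invS, Finset.mem_filter, Finset.mem_univ, true_and] using this
    have hky : ∀ x y : Fin n, x < y → p y < p x → y ≠ k := by
      intro x y h1 h2 h
      rw [h, hk] at h2
      have h3 : x < a := lt_trans (h ▸ h1) hka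
      exact absurd h2 (not_lt.mpr (hple x h3.le))
    simp only [hψ] at heq
    by_cases h1 : y1 = a <;> by_cases h2 : y2 = a
    · rw [if_pos h1, if_pos h2] at heq
      simp only [Prod.mk.injEq] at heq
      simp [heq.1, h1, h2]
    · rw [if_pos h1, if_neg h2] at heq
      exfalso
      have : y2 = k := by
        have := congrArg Prod.snd heq
        simpa using this.symm
      exact hky x2 y2 inv2.1 inv2.2 this
    · rw [if_neg h1, if_pos h2] at heq
      exfalso
      have : y1 = k := by
        have := congrArg Prod.snd heq
        simpa using this
      exact hky x1 y1 inv1.1 inv1.2 this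
    · rw [if_neg h1, if_neg h2] at heq
      exact heq
  have hMcard : M.card ≤ 1 + 2 * C.card := by
    calc M.card ≤ ((C.image fun y => (k, y)) ∪ (C.image fun x => (x, a))).card + 1 :=
          Finset.card_insert_le _ _
      _ ≤ (C.image fun y => (k, y)).card + (C.image fun x => (x, a)).card + 1 :=
          Nat.add_le_add_right (Finset.card_union_le _ _) 1
      _ ≤ C.card + C.card + 1 :=
          Nat.add_le_add_right (Nat.add_le_add (Finset.card_image_le) (Finset.card_image_le)) 1
      _ = 1 + 2 * C.card := by ring
  calc (invS p).card ≤ (invS p \ M).card + M.card := Finset.card_le_card_sdiff_add_card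
    _ ≤ (invS p').card + M.card := Nat.add_le_add_right
        (Finset.card_le_card_of_injOn ψ hmaps hinj) _
    _ ≤ (invS p').card + (1 + 2 * C.card) := Nat.add_le_add_left hMcard _
    _ = (invS p').card + 1 + 2 * C.card := by ring

lemma invS_one : invS (1 : Equiv.Perm (Fin n)) = ∅ := by
  rw [invS, Finset.filter_eq_empty_iff]
  rintro ⟨x, y⟩ _
  simp only [Equiv.Perm.one_apply]
  rintro ⟨h1, h2⟩
  exact absurd (h1.trans h2) (lt_irrefl _)

lemma lower_aux : ∀ (N : ℕ) (p : Equiv.Perm (Fin n)),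
    (Finset.univ.filter (fun x : Fin n => p x ≠ x)).card ≤ N →
    ((invS p).card : ℤ) ≤ Dsp p := by
  intro N
  induction N with
  | zero =>
    intro p hN
    have hp1 : p = 1 := by
      rw [Nat.le_zero, Finset.card_eq_zero, Finset.filter_eq_empty_iff] at hN
      exact Equiv.ext fun x => by simpa using not_not.mp (hN (Finset.mem_univ x))
    rw [hp1, invS_one]
    simpa using Dsp_nonneg (1 : Equiv.Perm (Fin n))
  | succ N ih =>
    intro p hN
    rcases eq_or_ne p 1 with rfl | hp
    · rw [invS_one]
      simpa using Dsp_nonneg (1 : Equiv.Perm (Fin n))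
    · obtain ⟨a, k, hk, hka, hpa, hfix, hple⟩ := setup p hp
      have hlta : ∀ x, x < a → x ≠ k → p x < a := by
        intro x hx hxk
        refine lt_of_le_of_ne (hple x hx.le) fun h => ?_
        exact hxk (p.injective (h.trans hk.symm))
      set p' := p * Equiv.swap k a with hp'
      set C := (Finset.Ioo k a).filter (fun l => p a < p l) with hC
      -- C bounds
      have hc1 : C.card + (k : ℕ) + 1 ≤ (a : ℕ) := by
        have h1 : C.card ≤ (Finset.Ioo (k : ℕ) (a : ℕ)).card := by
          refine Finset.card_le_card_of_injOn Fin.val ?_ (Fin.val_injective.injOn)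
          intro l hl
          simp only [Finset.mem_coe, hC, Finset.mem_filter, Finset.mem_Ioo] at hl
          rw [Finset.mem_coe, Finset.mem_Ioo]
          exact ⟨Fin.lt_iff_val_lt_val.mp hl.1.1, Fin.lt_iff_val_lt_val.mp hl.1.2⟩
        rw [Nat.card_Ioo] at h1
        have := Fin.lt_iff_val_lt_val.mp hka
        omega
      have hc2 : C.card + ((p a : Fin n) : ℕ) + 1 ≤ (a : ℕ) := by
        have h1 : C.card ≤ (Finset.Ioo ((p a : Fin n) : ℕ) (a : ℕ)).card := by
          refine Finset.card_le_card_of_injOn (fun l => ((p l : Fin n) : ℕ)) ?_ ?_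
          · intro l hl
            simp only [Finset.mem_coe, hC, Finset.mem_filter, Finset.mem_Ioo] at hl
            rw [Finset.mem_coe, Finset.mem_Ioo]
            have hlk : l ≠ k := (Fin.lt_iff_val_lt_val.mp hl.1.1).ne' ∘ congrArg Fin.val
            have := hlta l hl.1.2 hlk
            exact ⟨Fin.lt_iff_val_lt_val.mp hl.2, Fin.lt_iff_val_lt_val.mp this⟩
          · intro l1 _ l2 _ h
            exact p.injective (Fin.val_injective h)
        rw [Nat.card_Ioo] at h1
        have := Fin.lt_iff_val_lt_val.mp hpa
        omega
      have hmu := mu_swap p hk hka hpa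
      rw [← hp'] at hmu
      have hih : ((invS p').card : ℤ) ≤ Dsp p' := ih p' (by omega)
      have hstep := lower_step p hk hka hpa hfix hple
      have hswap := Dsp_swap p k a hka.ne
      rw [hk] at hswap
      simp only [Int.abs_eq_natAbs] at hswap
      rw [← hC] at hstep
      rw [← hp'] at hstep hswap
      have hkalt := Fin.lt_iff_val_lt_val.mp hka
      have hpalt := Fin.lt_iff_val_lt_val.mp hpa
      omega

theorem stmt_3 (n : ℕ) (p : Equiv.Perm (Fin n)) :
    ((Finset.univ.filter (fun ij : Fin n × Fin n => ij.1 < ij.2 ∧ p ij.2 < p ij.1)).card : ℤ) ≤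
        (∑ i : Fin n, |((p i : ℕ) : ℤ) - ((i : ℕ) : ℤ)|) ∧
      (∑ i : Fin n, |((p i : ℕ) : ℤ) - ((i : ℕ) : ℤ)|) ≤
        2 * ((Finset.univ.filter
          (fun ij : Fin n × Fin n => ij.1 < ij.2 ∧ p ij.2 < p ij.1)).card : ℤ) := by
  constructor
  · have h := lower_aux (Finset.univ.filter (fun x : Fin n => p x ≠ x)).card p le_rfl
    simpa only [invS, Dsp] using h
  · have h := upper_aux (invS p).card p le_rfl
    simpa only [invS, Dsp] using h
end

section
/- Let ω be a nonprincipal ultrafilter on ℕ, let n : ℕ → ℕ satisfy n(k) ≥ 2 for all k, and let p(k) be a permutation of Fin (n(k)) for each k. Then the normalized Coxeter lengths ℓ_C(p(k)) = 2·inv(p(k))/(n(k)(n(k)−1)) tend to 0 along ω if and only if the normalized total displacements T(p(k)) = (2/(n(k)(n(k)−1))) · Σ_i |p(k)(i) − i| tend to 0 along ω. -/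
open Finset Filter

variable {n : ℕ} (p : Equiv.Perm (Fin n))

lemma cardlt (i : Fin n) : (univ.filter fun j : Fin n => j < i).card = (i : ℕ) := by
  have : (univ.filter fun j : Fin n => j < i) = Finset.Iio i := by ext j; simp
  rw [this, Fin.card_Iio]

lemma cardplt (i : Fin n) : (univ.filter fun j : Fin n => p j < p i).card = ((p i : ℕ)) := by
  have : (univ.filter fun j : Fin n => p j < p i).card
      = (univ.filter fun v : Fin n => v < p i).card := by
    apply Finset.card_bij (fun j _ => p j)
    · intro a ha; simp at ha ⊢; exact ha
    · intro a _ b _ h; exact p.injective h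
    · intro b hb; refine ⟨p.symm b, ?_, by simp⟩; simp at hb ⊢; simpa using hb
  rw [this, cardlt]

lemma disp_eq (i : Fin n) :
    ((p i : ℕ) : ℤ) - (i : ℕ)
      = ((univ.filter fun j : Fin n => i < j ∧ p j < p i).card : ℤ)
        - (univ.filter fun j : Fin n => j < i ∧ p i < p j).card := by
  have hsplit1 : (univ.filter fun j : Fin n => p j < p i)
      = (univ.filter fun j : Fin n => j < i ∧ p j < p i)
        ∪ (univ.filter fun j : Fin n => i < j ∧ p j < p i) := by
    ext j
    simp only [mem_filter, mem_union, mem_univ, true_and]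
    constructor
    · intro h
      rcases lt_trichotomy j i with hj | hj | hj
      · exact Or.inl ⟨hj, h⟩
      · exact absurd (hj ▸ h) (lt_irrefl _)
      · exact Or.inr ⟨hj, h⟩
    · rintro (⟨_, h⟩ | ⟨_, h⟩) <;> exact h
  have hsplit2 : (univ.filter fun j : Fin n => j < i)
      = (univ.filter fun j : Fin n => j < i ∧ p j < p i)
        ∪ (univ.filter fun j : Fin n => j < i ∧ p i < p j) := by
    ext j
    simp only [mem_filter, mem_union, mem_univ, true_and]
    constructor
    · intro h
      rcases lt_trichotomy (p j) (p i) with hj | hj | hj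
      · exact Or.inl ⟨h, hj⟩
      · exact absurd (p.injective hj ▸ h) (lt_irrefl _)
      · exact Or.inr ⟨h, hj⟩
    · rintro (⟨h, _⟩ | ⟨h, _⟩) <;> exact h
  have hd1 : Disjoint (univ.filter fun j : Fin n => j < i ∧ p j < p i)
      (univ.filter fun j : Fin n => i < j ∧ p j < p i) := by
    rw [Finset.disjoint_filter]
    rintro j _ ⟨h1, _⟩ ⟨h2, _⟩; exact absurd (h1.trans h2) (lt_irrefl _)
  have hd2 : Disjoint (univ.filter fun j : Fin n => j < i ∧ p j < p i)
      (univ.filter fun j : Fin n => j < i ∧ p i < p j) := by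
    rw [Finset.disjoint_filter]
    rintro j _ ⟨_, h1⟩ ⟨_, h2⟩; exact absurd (h1.trans h2) (lt_irrefl _)
  have e1 := cardplt p i
  have e2 := cardlt i
  rw [hsplit1, Finset.card_union_of_disjoint hd1] at e1
  rw [hsplit2, Finset.card_union_of_disjoint hd2] at e2
  rw [← e1, ← e2]
  push_cast
  ring

lemma inv_fst :
    ((univ.filter fun ij : Fin n × Fin n => ij.1 < ij.2 ∧ p ij.2 < p ij.1).card)
      = ∑ i : Fin n, (univ.filter fun j : Fin n => i < j ∧ p j < p i).card := by
  rw [Finset.card_eq_sum_card_fiberwise (f := Prod.fst) (t := univ) (fun x _ => mem_univ _)]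
  refine Finset.sum_congr rfl fun i _ => ?_
  apply Finset.card_bij (fun ij _ => ij.2)
  · rintro ⟨a, b⟩ h; simp only [mem_filter, mem_univ, true_and] at h ⊢
    obtain ⟨⟨h1, h2⟩, rfl⟩ := h; exact ⟨h1, h2⟩
  · rintro ⟨a, b⟩ ha ⟨c, d⟩ hc h
    simp only [mem_filter] at ha hc
    cases ha.2; cases hc.2; cases h; rfl
  · intro j hj
    simp only [mem_filter, mem_univ, true_and] at hj
    exact ⟨(i, j), by simp [hj.1, hj.2], rfl⟩

lemma inv_snd :
    ((univ.filter fun ij : Fin n × Fin n => ij.1 < ij.2 ∧ p ij.2 < p ij.1).card)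
      = ∑ i : Fin n, (univ.filter fun j : Fin n => j < i ∧ p i < p j).card := by
  rw [Finset.card_eq_sum_card_fiberwise (f := Prod.snd) (t := univ) (fun x _ => mem_univ _)]
  refine Finset.sum_congr rfl fun i _ => ?_
  apply Finset.card_bij (fun ij _ => ij.1)
  · rintro ⟨a, b⟩ h; simp only [mem_filter, mem_univ, true_and] at h ⊢
    obtain ⟨⟨h1, h2⟩, rfl⟩ := h; exact ⟨h1, h2⟩
  · rintro ⟨a, b⟩ ha ⟨c, d⟩ hc h
    simp only [mem_filter] at ha hc
    cases ha.2; cases hc.2; cases h; rfl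
  · intro j hj
    simp only [mem_filter, mem_univ, true_and] at hj
    exact ⟨(j, i), by simp [hj.1, hj.2], rfl⟩

lemma D_le_two_I :
    ∑ i : Fin n, (((p i : ℕ) : ℤ) - (i : ℕ)).natAbs
      ≤ 2 * (univ.filter fun ij : Fin n × Fin n => ij.1 < ij.2 ∧ p ij.2 < p ij.1).card := by
  have : ∀ i : Fin n, (((p i : ℕ) : ℤ) - (i : ℕ)).natAbs
      ≤ (univ.filter fun j : Fin n => i < j ∧ p j < p i).card
        + (univ.filter fun j : Fin n => j < i ∧ p i < p j).card := by
    intro i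
    have h := disp_eq p i
    omega
  calc ∑ i : Fin n, (((p i : ℕ) : ℤ) - (i : ℕ)).natAbs
      ≤ ∑ i : Fin n, ((univ.filter fun j : Fin n => i < j ∧ p j < p i).card
        + (univ.filter fun j : Fin n => j < i ∧ p i < p j).card) :=
        Finset.sum_le_sum fun i _ => this i
    _ = _ := by rw [Finset.sum_add_distrib, ← inv_fst, ← inv_snd]; ring

lemma pairs_fst (Q : Fin n → Fin n → Prop) [DecidablePred fun ij : Fin n × Fin n => Q ij.1 ij.2]
    [∀ i, DecidablePred (Q i)] :
    (univ.filter fun ij : Fin n × Fin n => Q ij.1 ij.2).card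
      = ∑ i : Fin n, (univ.filter fun j : Fin n => Q i j).card := by
  rw [Finset.card_eq_sum_card_fiberwise (f := Prod.fst) (t := univ) (fun x _ => mem_univ _)]
  refine Finset.sum_congr rfl fun i _ => ?_
  apply Finset.card_bij (fun ij _ => ij.2)
  · rintro ⟨a, b⟩ h; simp only [mem_filter, mem_univ, true_and] at h ⊢
    obtain ⟨h1, rfl⟩ := h; exact h1
  · rintro ⟨a, b⟩ ha ⟨c, d⟩ hc h
    simp only [mem_filter] at ha hc
    cases ha.2; cases hc.2; cases h; rfl
  · intro j hj
    simp only [mem_filter, mem_univ, true_and] at hj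
    exact ⟨(i, j), by simp [hj], rfl⟩

lemma pairs_snd (Q : Fin n → Fin n → Prop) [DecidablePred fun ij : Fin n × Fin n => Q ij.1 ij.2]
    [∀ j, DecidablePred fun i => Q i j] :
    (univ.filter fun ij : Fin n × Fin n => Q ij.1 ij.2).card
      = ∑ j : Fin n, (univ.filter fun i : Fin n => Q i j).card := by
  rw [Finset.card_eq_sum_card_fiberwise (f := Prod.snd) (t := univ) (fun x _ => mem_univ _)]
  refine Finset.sum_congr rfl fun j _ => ?_
  apply Finset.card_bij (fun ij _ => ij.1)
  · rintro ⟨a, b⟩ h; simp only [mem_filter, mem_univ, true_and] at h ⊢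
    obtain ⟨h1, rfl⟩ := h; exact h1
  · rintro ⟨a, b⟩ ha ⟨c, d⟩ hc h
    simp only [mem_filter] at ha hc
    cases ha.2; cases hc.2; cases h; rfl
  · intro i hi
    simp only [mem_filter, mem_univ, true_and] at hi
    exact ⟨(i, j), by simp [hi], rfl⟩

lemma I_le_four_D :
    (univ.filter fun ij : Fin n × Fin n => ij.1 < ij.2 ∧ p ij.2 < p ij.1).card
      ≤ 4 * ∑ i : Fin n, (((p i : ℕ) : ℤ) - (i : ℕ)).natAbs := by
  set a : Fin n → ℕ := fun i => (((p i : ℕ) : ℤ) - (i : ℕ)).natAbs with ha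
  -- key pointwise fact
  have key : ∀ i j : Fin n, i < j → p j < p i →
      (j : ℕ) ≤ (i : ℕ) + 2 * a i ∨ (j : ℕ) ≤ (i : ℕ) + 2 * a j := by
    intro i j hij hp
    have hpn : ((p j : ℕ) : ℤ) < ((p i : ℕ) : ℤ) := by exact_mod_cast hp
    have hijn : ((i : ℕ) : ℤ) < ((j : ℕ) : ℤ) := by exact_mod_cast hij
    have hai : ((a i : ℕ) : ℤ) = |((p i : ℕ) : ℤ) - (i : ℕ)| := by
      rw [ha]; exact (Int.abs_eq_natAbs _).symm
    have haj : ((a j : ℕ) : ℤ) = |((p j : ℕ) : ℤ) - (j : ℕ)| := by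
      rw [ha]; exact (Int.abs_eq_natAbs _).symm
    have h1 : ((j : ℕ) : ℤ) - (i : ℕ) ≤ (a i : ℤ) + (a j : ℤ) := by
      rw [hai, haj]
      have := le_abs_self (((p i : ℕ) : ℤ) - (i : ℕ))
      have := neg_abs_le (((p j : ℕ) : ℤ) - (j : ℕ))
      linarith
    omega
  have hsub : (univ.filter fun ij : Fin n × Fin n => ij.1 < ij.2 ∧ p ij.2 < p ij.1)
      ⊆ (univ.filter fun ij : Fin n × Fin n => ij.1 < ij.2 ∧ (ij.2 : ℕ) ≤ (ij.1 : ℕ) + 2 * a ij.1)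
        ∪ (univ.filter fun ij : Fin n × Fin n => ij.1 < ij.2 ∧ (ij.2 : ℕ) ≤ (ij.1 : ℕ) + 2 * a ij.2) := by
    rintro ⟨i, j⟩ h
    simp only [mem_filter, mem_univ, true_and, mem_union] at h ⊢
    rcases key i j h.1 h.2 with hk | hk
    · exact Or.inl ⟨h.1, hk⟩
    · exact Or.inr ⟨h.1, hk⟩
  have c1 : (univ.filter fun ij : Fin n × Fin n =>
      ij.1 < ij.2 ∧ (ij.2 : ℕ) ≤ (ij.1 : ℕ) + 2 * a ij.1).card ≤ 2 * ∑ i : Fin n, a i := by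
    rw [pairs_fst (fun i j => i < j ∧ (j : ℕ) ≤ (i : ℕ) + 2 * a i), Finset.mul_sum]
    refine Finset.sum_le_sum fun i _ => ?_
    calc (univ.filter fun j : Fin n => i < j ∧ (j : ℕ) ≤ (i : ℕ) + 2 * a i).card
        ≤ (Finset.Ioc (i : ℕ) ((i : ℕ) + 2 * a i)).card := by
          apply Finset.card_le_card_of_injOn Fin.val
          · intro j hj
            simp only [Finset.mem_coe, mem_filter, mem_univ, true_and] at hj
            simp only [Finset.mem_coe, Finset.mem_Ioc]
            exact ⟨by exact_mod_cast hj.1, hj.2⟩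
          · intro x _ y _ h; exact Fin.val_injective h
      _ = 2 * a i := by rw [Nat.card_Ioc]; omega
  have c2 : (univ.filter fun ij : Fin n × Fin n =>
      ij.1 < ij.2 ∧ (ij.2 : ℕ) ≤ (ij.1 : ℕ) + 2 * a ij.2).card ≤ 2 * ∑ i : Fin n, a i := by
    rw [pairs_snd (fun i j => i < j ∧ (j : ℕ) ≤ (i : ℕ) + 2 * a j), Finset.mul_sum]
    refine Finset.sum_le_sum fun j _ => ?_
    calc (univ.filter fun i : Fin n => i < j ∧ (j : ℕ) ≤ (i : ℕ) + 2 * a j).card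
        ≤ (Finset.Ico ((j : ℕ) - 2 * a j) (j : ℕ)).card := by
          apply Finset.card_le_card_of_injOn Fin.val
          · intro i hi
            simp only [Finset.mem_coe, mem_filter, mem_univ, true_and] at hi
            simp only [Finset.mem_coe, Finset.mem_Ico]
            refine ⟨by omega, by exact_mod_cast hi.1⟩
          · intro x _ y _ h; exact Fin.val_injective h
      _ ≤ 2 * a j := by rw [Nat.card_Ico]; omega
  calc (univ.filter fun ij : Fin n × Fin n => ij.1 < ij.2 ∧ p ij.2 < p ij.1).card
      ≤ _ := Finset.card_le_card hsub
    _ ≤ _ + _ := Finset.card_union_le _ _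
    _ ≤ 2 * ∑ i : Fin n, a i + 2 * ∑ i : Fin n, a i := Nat.add_le_add c1 c2
    _ = 4 * ∑ i : Fin n, a i := by ring


theorem stmt_4 (ω : Ultrafilter ℕ) (hω : (ω : Filter ℕ) ≤ Filter.cofinite)
    (n : ℕ → ℕ) (hn : ∀ k, 2 ≤ n k) (p : ∀ k, Equiv.Perm (Fin (n k))) :
    Filter.Tendsto
        (fun k => 2 * ((Finset.univ.filter
            (fun ij : Fin (n k) × Fin (n k) => ij.1 < ij.2 ∧ p k ij.2 < p k ij.1)).card : ℝ) /
          ((n k : ℝ) * ((n k : ℝ) - 1)))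
        (ω : Filter ℕ) (nhds 0) ↔
      Filter.Tendsto
        (fun k => (2 / ((n k : ℝ) * ((n k : ℝ) - 1))) *
          ∑ i : Fin (n k), (|((p k i : ℕ) : ℤ) - ((i : ℕ) : ℤ)| : ℝ))
        (ω : Filter ℕ) (nhds 0) := by
  set I : ℕ → ℕ := fun k => (Finset.univ.filter
      (fun ij : Fin (n k) × Fin (n k) => ij.1 < ij.2 ∧ p k ij.2 < p k ij.1)).card with hI
  set D : ℕ → ℕ := fun k => ∑ i : Fin (n k), (((p k i : ℕ) : ℤ) - (i : ℕ)).natAbs with hD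
  set c : ℕ → ℝ := fun k => (n k : ℝ) * ((n k : ℝ) - 1) with hc
  have hcpos : ∀ k, 0 < c k := by
    intro k
    have h2 : (2 : ℝ) ≤ (n k : ℝ) := by exact_mod_cast hn k
    show (0 : ℝ) < (n k : ℝ) * ((n k : ℝ) - 1)
    nlinarith
  have hsum : ∀ k, (∑ i : Fin (n k), (|((p k i : ℕ) : ℤ) - ((i : ℕ) : ℤ)| : ℝ)) = (D k : ℝ) := by
    intro k
    rw [hD]
    push_cast
    refine Finset.sum_congr rfl fun i _ => ?_
    rw [Nat.cast_natAbs]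
    push_cast
    rfl
  set f : ℕ → ℝ := fun k => 2 * (I k : ℝ) / c k with hf
  set g : ℕ → ℝ := fun k => (2 / c k) * ∑ i : Fin (n k), (|((p k i : ℕ) : ℤ) - ((i : ℕ) : ℤ)| : ℝ)
    with hg
  have hg' : ∀ k, g k = 2 * (D k : ℝ) / c k := by
    intro k; rw [hg]; simp only; rw [hsum k]; ring
  have hfnn : ∀ k, 0 ≤ f k := fun k =>
    div_nonneg (by positivity) (hcpos k).le
  have hgnn : ∀ k, 0 ≤ g k := fun k => by
    rw [hg' k]; exact div_nonneg (by positivity) (hcpos k).le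
  have hfg : ∀ k, f k ≤ 4 * g k := by
    intro k
    have h : I k ≤ 4 * D k := I_le_four_D (p k)
    have h1 : (I k : ℝ) ≤ 4 * (D k : ℝ) := by exact_mod_cast h
    rw [hg' k, show (4 : ℝ) * (2 * (D k : ℝ) / c k) = 8 * (D k : ℝ) / c k by ring]
    show 2 * (I k : ℝ) / c k ≤ 8 * (D k : ℝ) / c k
    gcongr ?_ / c k
    · exact (hcpos k).le
    · linarith
  have hgf : ∀ k, g k ≤ 2 * f k := by
    intro k
    have h : D k ≤ 2 * I k := D_le_two_I (p k)
    have h1 : (D k : ℝ) ≤ 2 * (I k : ℝ) := by exact_mod_cast h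
    rw [hg' k]
    show 2 * (D k : ℝ) / c k ≤ 2 * (2 * (I k : ℝ) / c k)
    rw [show (2 : ℝ) * (2 * (I k : ℝ) / c k) = 4 * (I k : ℝ) / c k by ring]
    gcongr ?_ / c k
    · exact (hcpos k).le
    · linarith
  constructor
  · intro h
    have h2 : Filter.Tendsto (fun k => 2 * f k) (ω : Filter ℕ) (nhds 0) := by
      simpa using h.const_mul (2 : ℝ)
    exact squeeze_zero hgnn hgf h2
  · intro h
    have h4 : Filter.Tendsto (fun k => 4 * g k) (ω : Filter ℕ) (nhds 0) := by
      simpa using h.const_mul (4 : ℝ)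
    exact squeeze_zero hfnn hfg h4
end

section
/- For all permutations p, q of Fin n, |inv(p) − inv(q)| ≤ (n − 1) · |{i : p(i) ≠ q(i)}| (the absolute value taken in ℤ). In particular the normalized Coxeter length ℓ_C descends to a well-defined function on the metric ultraproduct of symmetric groups with respect to the normalized Hamming distance. -/
open Finset

theorem stmt_6 (n : ℕ) (p q : Equiv.Perm (Fin n)) :
    |((Finset.univ.filter
          (fun ij : Fin n × Fin n => ij.1 < ij.2 ∧ p ij.2 < p ij.1)).card : ℤ) -
        ((Finset.univ.filter
          (fun ij : Fin n × Fin n => ij.1 < ij.2 ∧ q ij.2 < q ij.1)).card : ℤ)| ≤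
      ((n : ℤ) - 1) * ((Finset.univ.filter (fun i : Fin n => p i ≠ q i)).card : ℤ) := by
  set A := Finset.univ.filter (fun ij : Fin n × Fin n => ij.1 < ij.2 ∧ p ij.2 < p ij.1) with hA
  set B := Finset.univ.filter (fun ij : Fin n × Fin n => ij.1 < ij.2 ∧ q ij.2 < q ij.1) with hB
  set D := Finset.univ.filter (fun i : Fin n => p i ≠ q i) with hD
  set S := D.biUnion (fun d => Finset.univ.filter
      (fun ij : Fin n × Fin n => ij.1 < ij.2 ∧ (ij.1 = d ∨ ij.2 = d))) with hS
  have hsub : (A \ B) ∪ (B \ A) ⊆ S := by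
    intro ij hij
    have hlt : ij.1 < ij.2 := by
      rcases Finset.mem_union.mp hij with h | h <;>
        · have := (Finset.mem_filter.mp (Finset.mem_sdiff.mp h).1).2
          exact this.1
    have hD' : ij.1 ∈ D ∨ ij.2 ∈ D := by
      by_contra h
      push_neg at h
      simp only [hD, Finset.mem_filter, Finset.mem_univ, true_and, not_not] at h
      obtain ⟨h1, h2⟩ := h
      rcases Finset.mem_union.mp hij with h | h
      · obtain ⟨ha, hb⟩ := Finset.mem_sdiff.mp h
        have ha' := (Finset.mem_filter.mp ha).2
        exact hb (Finset.mem_filter.mpr ⟨Finset.mem_univ _, ha'.1,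
          by rw [← h1, ← h2]; exact ha'.2⟩)
      · obtain ⟨ha, hb⟩ := Finset.mem_sdiff.mp h
        have ha' := (Finset.mem_filter.mp ha).2
        exact hb (Finset.mem_filter.mpr ⟨Finset.mem_univ _, ha'.1,
          by rw [h1, h2]; exact ha'.2⟩)
    rcases hD' with h | h
    · exact Finset.mem_biUnion.mpr ⟨ij.1, h, by simp [hlt]⟩
    · exact Finset.mem_biUnion.mpr ⟨ij.2, h, by simp [hlt]⟩
  have hcardS : S.card ≤ D.card * (n - 1) := by
    rw [hS]
    refine le_trans Finset.card_biUnion_le ?_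
    refine le_trans (Finset.sum_le_card_nsmul D _ (n - 1) ?_) (by rw [smul_eq_mul])
    intro d _
    have hmaps : ∀ ij ∈ Finset.univ.filter
        (fun ij : Fin n × Fin n => ij.1 < ij.2 ∧ (ij.1 = d ∨ ij.2 = d)),
        (if ij.1 = d then ij.2 else ij.1) ∈ Finset.univ.erase d := by
      intro ij hij
      obtain ⟨hlt, hcase⟩ := (Finset.mem_filter.mp hij).2
      by_cases h1 : ij.1 = d
      · simp only [if_pos h1]
        exact Finset.mem_erase.mpr ⟨by rw [← h1]; exact (ne_of_gt hlt), Finset.mem_univ _⟩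
      · simp only [if_neg h1]
        refine Finset.mem_erase.mpr ⟨?_, Finset.mem_univ _⟩
        rcases hcase with h | h
        · exact absurd h h1
        · rw [← h]; exact ne_of_lt hlt
    have hinj : Set.InjOn (fun ij : Fin n × Fin n => if ij.1 = d then ij.2 else ij.1)
        (Finset.univ.filter
          (fun ij : Fin n × Fin n => ij.1 < ij.2 ∧ (ij.1 = d ∨ ij.2 = d))) := by
      intro x hx y hy hxy
      obtain ⟨hxlt, hxc⟩ := (Finset.mem_filter.mp hx).2
      obtain ⟨hylt, hyc⟩ := (Finset.mem_filter.mp hy).2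
      simp only at hxy
      by_cases h1 : x.1 = d <;> by_cases h2 : y.1 = d
      · rw [if_pos h1, if_pos h2] at hxy
        exact Prod.ext (h1.trans h2.symm) hxy
      · rw [if_pos h1, if_neg h2] at hxy
        have hy2 : y.2 = d := by tauto
        rw [h1] at hxlt; rw [hy2] at hylt; rw [hxy] at hxlt
        exact absurd hxlt (lt_asymm hylt)
      · rw [if_neg h1, if_pos h2] at hxy
        have hx2 : x.2 = d := by tauto
        rw [h2] at hylt; rw [hx2] at hxlt; rw [hxy] at hxlt
        exact absurd hylt (lt_asymm hxlt)
      · rw [if_neg h1, if_neg h2] at hxy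
        have hx2 : x.2 = d := by tauto
        have hy2 : y.2 = d := by tauto
        exact Prod.ext hxy (hx2.trans hy2.symm)
    have := Finset.card_le_card_of_injOn _ hmaps hinj
    simpa [Finset.card_erase_of_mem] using this
  have key : ((A \ B) ∪ (B \ A)).card ≤ D.card * (n - 1) :=
    le_trans (Finset.card_le_card hsub) hcardS
  have h1 : A.card ≤ B.card + D.card * (n - 1) := by
    have h0 := Finset.card_inter_add_card_sdiff A B
    have h2 : (A ∩ B).card ≤ B.card := Finset.card_le_card Finset.inter_subset_right
    have h3 : (A \ B).card ≤ D.card * (n - 1) :=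
      le_trans (Finset.card_le_card Finset.subset_union_left) key
    omega
  have h2 : B.card ≤ A.card + D.card * (n - 1) := by
    have h0 := Finset.card_inter_add_card_sdiff B A
    have h2 : (B ∩ A).card ≤ A.card := Finset.card_le_card Finset.inter_subset_right
    have h3 : (B \ A).card ≤ D.card * (n - 1) :=
      le_trans (Finset.card_le_card Finset.subset_union_right) key
    omega
  rcases Nat.eq_zero_or_pos n with hn | hn
  · have hDn : D.card = 0 := by
      have := Finset.card_le_univ D
      rw [Fintype.card_fin] at this
      omega
    rw [hDn] at h1 h2
    simp only [Nat.zero_mul, Nat.add_zero] at h1 h2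
    have : A.card = B.card := le_antisymm h1 h2
    rw [this, hDn]
    simp
  · have e : ((D.card * (n - 1) : ℕ) : ℤ) = ((n : ℤ) - 1) * D.card := by
      rw [Nat.cast_mul, Nat.cast_sub hn]
      push_cast; ring
    have c1 : (A.card : ℤ) ≤ B.card + ((D.card * (n - 1) : ℕ) : ℤ) := by exact_mod_cast h1
    have c2 : (B.card : ℤ) ≤ A.card + ((D.card * (n - 1) : ℕ) : ℤ) := by exact_mod_cast h2
    rw [e] at c1 c2
    rw [abs_sub_le_iff]
    constructor <;> linarith
end

section
/- For every permutation p of Fin n, Σ_{x ∈ Fin n} |p(Iic x) Δ (Iic x)| = Σ_{y ∈ Fin n} |p(y) − y|, where Iic x = {y ∈ Fin n : y ≤ x}, p(Iic x) is its image under p, Δ denotes symmetric difference of finite sets, |·| on the left is cardinality and |p(y) − y| on the right is the absolute value of the difference in ℤ. -/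
open Finset

theorem stmt_7 (n : ℕ) (p : Equiv.Perm (Fin n)) :
    ∑ x : Fin n, (symmDiff ((Finset.Iic x).image p) (Finset.Iic x)).card =
      ∑ y : Fin n, (((p y : ℕ) : ℤ) - ((y : ℕ) : ℤ)).natAbs := by
  have hmem : ∀ (x y : Fin n),
      y ∈ symmDiff ((Finset.Iic x).image p) (Finset.Iic x) ↔ ¬ (p.symm y ≤ x ↔ y ≤ x) := by
    intro x y
    have himg : y ∈ (Finset.Iic x).image p ↔ p.symm y ≤ x := by
      simp [Finset.mem_image]
      constructor
      · rintro ⟨a, ha, rfl⟩; simpa using ha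
      · intro h; exact ⟨p.symm y, h, by simp⟩
    rw [Finset.mem_symmDiff, himg]; simp only [Finset.mem_Iic]
    rw [not_iff]
    tauto
  have step1 : ∀ x : Fin n, (symmDiff ((Finset.Iic x).image p) (Finset.Iic x)).card
      = ∑ y : Fin n, (if ¬ (p.symm y ≤ x ↔ y ≤ x) then 1 else 0) := by
    intro x
    rw [← Finset.card_filter]
    congr 1
    ext y
    simp [hmem]
  have step2 : ∀ y : Fin n,
      (∑ x : Fin n, if ¬ (p.symm y ≤ x ↔ y ≤ x) then 1 else 0)
        = (((y : ℕ) : ℤ) - ((p.symm y : ℕ) : ℤ)).natAbs := by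
    intro y
    rw [← Finset.card_filter]
    rcases le_total (p.symm y) y with h | h
    · have : Finset.univ.filter (fun x => ¬ (p.symm y ≤ x ↔ y ≤ x)) = Finset.Ico (p.symm y) y := by
        ext x
        simp only [Finset.mem_filter, Finset.mem_univ, true_and, Finset.mem_Ico,
          Fin.le_def, Fin.lt_def] at *
        omega
      rw [this, Fin.card_Ico]
      omega
    · have : Finset.univ.filter (fun x => ¬ (p.symm y ≤ x ↔ y ≤ x)) = Finset.Ico y (p.symm y) := by
        ext x
        simp only [Finset.mem_filter, Finset.mem_univ, true_and, Finset.mem_Ico,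
          Fin.le_def, Fin.lt_def] at *
        omega
      rw [this, Fin.card_Ico]
      omega
  calc ∑ x : Fin n, (symmDiff ((Finset.Iic x).image p) (Finset.Iic x)).card
      = ∑ x : Fin n, ∑ y : Fin n, (if ¬ (p.symm y ≤ x ↔ y ≤ x) then 1 else 0) := by
        exact Finset.sum_congr rfl fun x _ => step1 x
    _ = ∑ y : Fin n, ∑ x : Fin n, (if ¬ (p.symm y ≤ x ↔ y ≤ x) then 1 else 0) :=
        Finset.sum_comm
    _ = ∑ y : Fin n, (((y : ℕ) : ℤ) - ((p.symm y : ℕ) : ℤ)).natAbs :=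
        Finset.sum_congr rfl fun y _ => step2 y
    _ = ∑ y : Fin n, (((p y : ℕ) : ℤ) - ((y : ℕ) : ℤ)).natAbs := by
        rw [← Equiv.sum_comp p (fun y => (((y : ℕ) : ℤ) - ((p.symm y : ℕ) : ℤ)).natAbs)]
        simp
end

section
/- Let m ≤ n, let p : Fin m → Equiv.Perm (Fin n) be a family of permutations of Fin n, and let ε : Fin m → Bool. Assume that for every x ∈ Fin n the map j ↦ p(j)(x) is injective on Fin m. Then Σ over all finsets s of Fin n of |{x ∈ Fin n : for all j, (p(j)(x) ∈ s ↔ ε(j) = true)}| equals 2^(n−m) · n. -/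
open Finset

lemma count_subsets {α : Type*} [Fintype α] [DecidableEq α] (T A : Finset α) (hA : A ⊆ T) :
    (univ.filter (fun s : Finset α => s ∩ T = A)).card = 2 ^ (Fintype.card α - T.card) := by
  rw [← Finset.card_compl T, ← Finset.card_powerset]
  apply Finset.card_bij (fun s _ => s \ T)
  · intro s hs
    simp only [Finset.mem_powerset]
    intro y hy
    simp only [Finset.mem_sdiff] at hy
    simp [hy.2]
  · intro s hs t ht h
    simp only [Finset.mem_filter, Finset.mem_univ, true_and] at hs ht
    have hs' : s = s \ T ∪ A := by
      rw [← hs]; ext y; by_cases hy : y ∈ T <;> simp [Finset.mem_sdiff, hy]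
    have ht' : t = t \ T ∪ A := by
      rw [← ht]; ext y; by_cases hy : y ∈ T <;> simp [Finset.mem_sdiff, hy]
    rw [hs', ht', h]
  · intro t ht
    simp only [Finset.mem_powerset] at ht
    refine ⟨t ∪ A, ?_, ?_⟩
    · simp only [Finset.mem_filter, Finset.mem_univ, true_and]
      ext y
      simp only [Finset.mem_inter, Finset.mem_union]
      constructor
      · rintro ⟨hy1 | hy1, hy2⟩
        · exact absurd hy2 (by simpa using ht hy1)
        · exact hy1
      · intro hy; exact ⟨Or.inr hy, hA hy⟩
    · ext y
      simp only [Finset.mem_sdiff, Finset.mem_union]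
      constructor
      · rintro ⟨hy1 | hy1, hy2⟩
        · exact hy1
        · exact absurd (hA hy1) hy2
      · intro hy
        exact ⟨Or.inl hy, by simpa using ht hy⟩

theorem stmt_10 (m n : ℕ) (hmn : m ≤ n) (p : Fin m → Equiv.Perm (Fin n))
    (ε : Fin m → Bool)
    (hinj : ∀ x : Fin n, Function.Injective (fun j : Fin m => p j x)) :
    ∑ s : Finset (Fin n),
        (Finset.univ.filter (fun x : Fin n => ∀ j : Fin m, (p j x ∈ s ↔ ε j = true))).card =
      2 ^ (n - m) * n := by
  simp only [Finset.card_filter]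
  rw [Finset.sum_comm]
  have key : ∀ x : Fin n,
      (∑ s : Finset (Fin n), if ∀ j : Fin m, (p j x ∈ s ↔ ε j = true) then 1 else 0)
        = 2 ^ (n - m) := by
    intro x
    set T : Finset (Fin n) := Finset.univ.image (fun j => p j x) with hT
    set A : Finset (Fin n) := (Finset.univ.filter (fun j => ε j = true)).image (fun j => p j x)
      with hAdef
    have hA : A ⊆ T := Finset.image_subset_image (Finset.filter_subset _ _)
    have hcond : ∀ s : Finset (Fin n),
        (∀ j : Fin m, (p j x ∈ s ↔ ε j = true)) ↔ s ∩ T = A := by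
      intro s
      constructor
      · intro h
        ext y
        simp only [Finset.mem_inter, hT, hAdef, Finset.mem_image, Finset.mem_filter,
          Finset.mem_univ, true_and]
        constructor
        · rintro ⟨hy, j, rfl⟩
          exact ⟨j, (h j).1 hy, rfl⟩
        · rintro ⟨j, hj, rfl⟩
          exact ⟨(h j).2 hj, j, rfl⟩
      · intro h j
        constructor
        · intro hy
          have : p j x ∈ s ∩ T := by
            simp only [hT, Finset.mem_inter, Finset.mem_image, Finset.mem_univ, true_and]
            exact ⟨hy, j, rfl⟩
          rw [h] at this
          simp only [hAdef, Finset.mem_image, Finset.mem_filter, Finset.mem_univ, true_and]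
            at this
          obtain ⟨j', hj', hjj'⟩ := this
          have := hinj x hjj'
          rwa [← this]
        · intro hj
          have : p j x ∈ A := by
            simp only [hAdef, Finset.mem_image, Finset.mem_filter, Finset.mem_univ, true_and]
            exact ⟨j, hj, rfl⟩
          rw [← h] at this
          exact (Finset.mem_inter.1 this).1
    have hTcard : T.card = m := by
      rw [hT, Finset.card_image_of_injective _ (hinj x), Finset.card_univ, Fintype.card_fin]
    calc (∑ s : Finset (Fin n), if ∀ j : Fin m, (p j x ∈ s ↔ ε j = true) then 1 else 0)
        = (univ.filter (fun s : Finset (Fin n) => s ∩ T = A)).card := by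
          rw [Finset.card_filter]
          exact Finset.sum_congr rfl (fun s _ => if_congr (hcond s) rfl rfl)
      _ = 2 ^ (n - m) := by
          rw [count_subsets T A hA, Fintype.card_fin, hTcard]
  rw [Finset.sum_congr rfl (fun x _ => key x)]
  simp [mul_comm]
end

section
/- Let 2m ≤ n, let p : Fin m → Equiv.Perm (Fin n) be a family of permutations of Fin n, and let ε : Fin m → Bool. Assume that for every x ∈ Fin n the map j ↦ p(j)(x) is injective on Fin m. Then Σ over all finsets s of Fin n of (|{x ∈ Fin n : for all j, (p(j)(x) ∈ s ↔ ε(j) = true)}|)² is at most 2^(n−2m) · n² + 2^(n−m) · n · m². -/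
open Finset

lemma aux_count {α β : Type*} [Fintype α] [Fintype β]
    (P : α → β → Prop) [∀ x s, Decidable (P x s)] :
    ∑ s : β, ((univ.filter (fun x => P x s)).card) ^ 2
      = ∑ x : α, ∑ y : α, (univ.filter (fun s => P x s ∧ P y s)).card := by
  simp only [Finset.card_filter, sq, Finset.sum_mul_sum]
  rw [Finset.sum_comm]
  refine Finset.sum_congr rfl fun x _ => ?_
  rw [Finset.sum_comm]
  refine Finset.sum_congr rfl fun y _ => ?_
  refine Finset.sum_congr rfl fun s _ => ?_
  by_cases h1 : P x s <;> by_cases h2 : P y s <;> simp [h1, h2]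

lemma aux_bound {n : ℕ} (P : Finset (Fin n) → Prop) [DecidablePred P] (T : Finset (Fin n))
    (h : ∀ s s', P s → P s' → ∀ a ∈ T, (a ∈ s ↔ a ∈ s')) :
    (univ.filter P).card ≤ 2 ^ (n - T.card) := by
  classical
  have hmaps : ∀ s ∈ univ.filter P, s \ T ∈ (univ \ T).powerset := by
    intro s _
    simp only [Finset.mem_powerset]
    intro a ha
    simp only [Finset.mem_sdiff] at ha ⊢
    exact ⟨Finset.mem_univ a, ha.2⟩
  have hinj : Set.InjOn (fun s => s \ T) (univ.filter P) := by
    intro s hs s' hs' heq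
    simp only [Finset.coe_filter, Set.mem_setOf_eq] at hs hs'
    ext a
    by_cases ha : a ∈ T
    · exact h s s' hs.2 hs'.2 a ha
    · have := Finset.ext_iff.mp heq a
      simpa [Finset.mem_sdiff, ha] using this
  calc (univ.filter P).card ≤ ((univ \ T).powerset).card :=
        Finset.card_le_card_of_injOn _ hmaps hinj
    _ = 2 ^ (n - T.card) := by
        rw [Finset.card_powerset, Finset.card_sdiff_of_subset (Finset.subset_univ T),
          Finset.card_univ, Fintype.card_fin]

theorem stmt_12 (m n : ℕ) (hmn : 2 * m ≤ n) (p : Fin m → Equiv.Perm (Fin n))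
    (ε : Fin m → Bool)
    (hinj : ∀ x : Fin n, Function.Injective (fun j : Fin m => p j x)) :
    ∑ s : Finset (Fin n),
        ((Finset.univ.filter
          (fun x : Fin n => ∀ j : Fin m, (p j x ∈ s ↔ ε j = true))).card) ^ 2 ≤
      2 ^ (n - 2 * m) * n ^ 2 + 2 ^ (n - m) * n * m ^ 2 := by
  classical
  rw [aux_count (fun (x : Fin n) (s : Finset (Fin n)) => ∀ j : Fin m, (p j x ∈ s ↔ ε j = true))]
  set A : Fin n → Finset (Fin n) := fun x => Finset.image (fun j => p j x) Finset.univ with hA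
  have hAcard : ∀ x, (A x).card = m := by
    intro x
    rw [hA]
    simp only
    rw [Finset.card_image_of_injective _ (hinj x), Finset.card_univ, Fintype.card_fin]
  have key : ∀ x y : Fin n, (univ.filter (fun s : Finset (Fin n) =>
      (∀ j, (p j x ∈ s ↔ ε j = true)) ∧ (∀ j, (p j y ∈ s ↔ ε j = true)))).card
      ≤ 2 ^ (n - (A x ∪ A y).card) := by
    intro x y
    apply aux_bound
    intro s s' hs hs' a ha
    rw [Finset.mem_union] at ha
    rcases ha with ha | ha
    · simp only [hA, Finset.mem_image, Finset.mem_univ, true_and] at ha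
      obtain ⟨j, rfl⟩ := ha
      rw [hs.1 j, hs'.1 j]
    · simp only [hA, Finset.mem_image, Finset.mem_univ, true_and] at ha
      obtain ⟨j, rfl⟩ := ha
      rw [hs.2 j, hs'.2 j]
  have bound1 : ∀ x y : Fin n, Disjoint (A x) (A y) → (univ.filter (fun s : Finset (Fin n) =>
      (∀ j, (p j x ∈ s ↔ ε j = true)) ∧ (∀ j, (p j y ∈ s ↔ ε j = true)))).card
      ≤ 2 ^ (n - 2 * m) := by
    intro x y hd
    have := key x y
    rwa [Finset.card_union_of_disjoint hd, hAcard, hAcard, ← two_mul] at this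
  have bound2 : ∀ x y : Fin n, (univ.filter (fun s : Finset (Fin n) =>
      (∀ j, (p j x ∈ s ↔ ε j = true)) ∧ (∀ j, (p j y ∈ s ↔ ε j = true)))).card
      ≤ 2 ^ (n - m) := by
    intro x y
    refine (key x y).trans ?_
    apply Nat.pow_le_pow_right (by norm_num)
    have : m ≤ (A x ∪ A y).card := by
      rw [← hAcard x]
      exact Finset.card_le_card Finset.subset_union_left
    omega
  have badcard : ∀ x : Fin n, (univ.filter (fun y => ¬ Disjoint (A x) (A y))).card ≤ m ^ 2 := by
    intro x
    have hsub : univ.filter (fun y => ¬ Disjoint (A x) (A y)) ⊆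
        Finset.image (fun jj : Fin m × Fin m => (p jj.2)⁻¹ (p jj.1 x)) univ := by
      intro y hy
      simp only [Finset.mem_filter] at hy
      rw [Finset.not_disjoint_iff] at hy
      obtain ⟨a, hax, hay⟩ := hy.2
      simp only [hA, Finset.mem_image, Finset.mem_univ, true_and] at hax hay
      obtain ⟨j, hj⟩ := hax
      obtain ⟨j', hj'⟩ := hay
      simp only [Finset.mem_image, Finset.mem_univ, true_and]
      refine ⟨(j, j'), ?_⟩
      simp only
      rw [hj, ← hj']
      simp
    calc (univ.filter (fun y => ¬ Disjoint (A x) (A y))).card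
        ≤ (Finset.image (fun jj : Fin m × Fin m => (p jj.2)⁻¹ (p jj.1 x)) univ).card :=
          Finset.card_le_card hsub
      _ ≤ (Finset.univ : Finset (Fin m × Fin m)).card := Finset.card_image_le
      _ = m ^ 2 := by simp [sq]
  calc ∑ x : Fin n, ∑ y : Fin n, (univ.filter (fun s : Finset (Fin n) =>
        (∀ j, (p j x ∈ s ↔ ε j = true)) ∧ (∀ j, (p j y ∈ s ↔ ε j = true)))).card
      ≤ ∑ _x : Fin n, (2 ^ (n - 2 * m) * n + 2 ^ (n - m) * m ^ 2) := by
        apply Finset.sum_le_sum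
        intro x _
        rw [← Finset.sum_filter_add_sum_filter_not univ (fun y => Disjoint (A x) (A y))]
        have h1 : ∑ y ∈ univ.filter (fun y => Disjoint (A x) (A y)),
            (univ.filter (fun s : Finset (Fin n) =>
            (∀ j, (p j x ∈ s ↔ ε j = true)) ∧ (∀ j, (p j y ∈ s ↔ ε j = true)))).card
            ≤ 2 ^ (n - 2 * m) * n := by
          refine (Finset.sum_le_card_nsmul _ _ (2 ^ (n - 2 * m)) ?_).trans ?_
          · intro y hy
            exact bound1 x y (Finset.mem_filter.mp hy).2
          · rw [smul_eq_mul]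
            have : (univ.filter (fun y => Disjoint (A x) (A y))).card ≤ n := by
              refine (Finset.card_filter_le _ _).trans ?_
              simp
            calc _ ≤ n * 2 ^ (n - 2 * m) := Nat.mul_le_mul_right _ this
              _ = 2 ^ (n - 2 * m) * n := Nat.mul_comm _ _
        have h2 : ∑ y ∈ univ.filter (fun y => ¬ Disjoint (A x) (A y)),
            (univ.filter (fun s : Finset (Fin n) =>
            (∀ j, (p j x ∈ s ↔ ε j = true)) ∧ (∀ j, (p j y ∈ s ↔ ε j = true)))).card
            ≤ 2 ^ (n - m) * m ^ 2 := by
          refine (Finset.sum_le_card_nsmul _ _ (2 ^ (n - m)) fun y _ => bound2 x y).trans ?_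
          rw [smul_eq_mul]
          calc _ ≤ m ^ 2 * 2 ^ (n - m) := Nat.mul_le_mul_right _ (badcard x)
            _ = 2 ^ (n - m) * m ^ 2 := Nat.mul_comm _ _
        exact Nat.add_le_add h1 h2
    _ = 2 ^ (n - 2 * m) * n ^ 2 + 2 ^ (n - m) * n * m ^ 2 := by
        rw [Finset.sum_const, Finset.card_univ, Fintype.card_fin, smul_eq_mul]
        ring
end

section
/- Let p be a permutation of Fin n and let B, C be finsets of Fin n such that C ⊆ B, every x ∈ B satisfies p(x) ≠ x, the image p(C) is disjoint from C, and C is maximal with this property in B, i.e. for every x ∈ B \ C, the image p(insert x C) is not disjoint from insert x C. Then |B| ≤ 3 · |C|. -/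
open Finset

theorem stmt_13 (n : ℕ) (p : Equiv.Perm (Fin n)) (B C : Finset (Fin n))
    (hCB : C ⊆ B) (hfix : ∀ x ∈ B, p x ≠ x)
    (hdisj : Disjoint (C.image p) C)
    (hmax : ∀ x ∈ B \ C, ¬ Disjoint ((insert x C).image p) (insert x C)) :
    B.card ≤ 3 * C.card := by
  have key : B ⊆ C ∪ C.image p ∪ C.image p.symm := by
    intro x hx
    by_cases hxC : x ∈ C
    · simp [hxC]
    · have h := hmax x (mem_sdiff.mpr ⟨hx, hxC⟩)
      rw [Finset.not_disjoint_iff] at h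
      obtain ⟨y, hy1, hy2⟩ := h
      simp only [image_insert, mem_insert] at hy1 hy2
      rcases hy1 with rfl | hy1
      · rcases hy2 with h | h
        · exact absurd h (hfix x hx)
        · simp only [mem_union, mem_image]
          right
          exact ⟨p x, h, p.symm_apply_apply x⟩
      · rcases hy2 with rfl | h
        · simp only [mem_union]
          left; right; exact hy1
        · exact absurd h (Finset.disjoint_left.mp hdisj hy1)
  calc B.card ≤ (C ∪ C.image p ∪ C.image p.symm).card := card_le_card key
    _ ≤ C.card + (C.image p).card + (C.image p.symm).card := by
        refine le_trans (card_union_le _ _) ?_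
        gcongr
        exact card_union_le _ _
    _ ≤ 3 * C.card := by
        rw [card_image_of_injective _ p.injective,
          card_image_of_injective _ p.symm.injective]
        omega
end

section
/- Let ω be a nonprincipal ultrafilter on ℕ and let n : ℕ → ℕ tend to infinity. For each k let A(k) be a subset of Fin (n(k)). Then the set S = { t ∈ ℝ : there exists x ∈ Π_k Fin (n(k)) such that {k : x(k) ∈ A(k)} ∈ ω and the sequence ((x(k) : ℝ)/n(k)) tends to t along ω } is a closed subset of ℝ. -/
open Filter

theorem stmt_15 (ω : Ultrafilter ℕ) (hω : (ω : Filter ℕ) ≤ Filter.cofinite)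
    (n : ℕ → ℕ) (hn : Filter.Tendsto n Filter.atTop Filter.atTop)
    (A : ∀ k, Set (Fin (n k))) :
    IsClosed {t : ℝ | ∃ x : ∀ k, Fin (n k),
      {k | x k ∈ A k} ∈ ω ∧
        Filter.Tendsto (fun k => ((x k : ℕ) : ℝ) / (n k : ℝ)) (ω : Filter ℕ) (nhds t)} := by
  classical
  set S : Set ℝ := {t : ℝ | ∃ x : ∀ k, Fin (n k),
      {k | x k ∈ A k} ∈ ω ∧
        Filter.Tendsto (fun k => ((x k : ℕ) : ℝ) / (n k : ℝ)) (ω : Filter ℕ) (nhds t)} with hS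
  apply isClosed_of_closure_subset
  intro t ht
  -- get one witness to use as a default value
  obtain ⟨s₀, hs₀, -⟩ := Metric.mem_closure_iff.1 ht 1 one_pos
  obtain ⟨y₀, hy₀, -⟩ := hs₀
  have hA' : {k | (A k).Nonempty} ∈ ω := by
    by_contra h
    have hc : {k | (A k).Nonempty}ᶜ ∈ ω := (Ultrafilter.compl_mem_iff_notMem).2 h
    have : {k | y₀ k ∈ A k} ∩ {k | (A k).Nonempty}ᶜ ∈ ω := Filter.inter_mem hy₀ hc
    obtain ⟨k, hk1, hk2⟩ := Filter.nonempty_of_mem this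
    exact hk2 ⟨y₀ k, hk1⟩
  have hmin : ∀ k, (A k).Nonempty →
      ∃ a ∈ A k, ∀ b ∈ A k, |((a : ℕ) : ℝ) / n k - t| ≤ |((b : ℕ) : ℝ) / n k - t| :=
    fun k hk => Set.exists_min_image (A k) (fun a => |((a : ℕ) : ℝ) / n k - t|)
      (Set.toFinite _) hk
  choose f hf1 hf2 using hmin
  set x : ∀ k, Fin (n k) := fun k => if h : (A k).Nonempty then f k h else y₀ k with hx
  refine ⟨x, ?_, ?_⟩
  · apply Filter.mem_of_superset hA'
    intro k hk
    simp only [Set.mem_setOf_eq] at hk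
    show (if h : (A k).Nonempty then f k h else y₀ k) ∈ A k
    rw [dif_pos hk]
    exact hf1 k hk
  · rw [Metric.tendsto_nhds]
    intro ε hε
    obtain ⟨s, hs, hst⟩ := Metric.mem_closure_iff.1 ht (ε / 2) (by linarith)
    obtain ⟨y, hy1, hy2⟩ := hs
    have hy3 : ∀ᶠ k in (ω : Filter ℕ), dist (((y k : ℕ) : ℝ) / n k) s < ε / 2 :=
      (Metric.tendsto_nhds.1 hy2) (ε / 2) (by linarith)
    filter_upwards [hy1, hy3] with k hk1 hk2
    have hne : (A k).Nonempty := ⟨y k, hk1⟩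
    have hxk : x k = f k hne := dif_pos hne
    have h1 : |((x k : ℕ) : ℝ) / n k - t| ≤ |((y k : ℕ) : ℝ) / n k - t| := by
      rw [hxk]; exact hf2 k hne (y k) hk1
    have h2 : |((y k : ℕ) : ℝ) / n k - t| < ε := by
      calc |((y k : ℕ) : ℝ) / n k - t|
          ≤ |((y k : ℕ) : ℝ) / n k - s| + |s - t| := abs_sub_le _ _ _
        _ < ε / 2 + ε / 2 := by
            rw [Real.dist_eq] at hk2 hst
            exact add_lt_add hk2 (by rwa [abs_sub_comm])
        _ = ε := by ring
    rw [Real.dist_eq]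
    exact lt_of_le_of_lt h1 h2
end
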